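/- Let S be a finite nonempty set, let P and Q be column-stochastic matrices indexed by S × S, let γ ∈ [0,1), and let c ≥ 0 be such that ∑_{s'} |P(s', s) - Q(s', s)| ≤ c for every s ∈ S. Then for every vector x ∈ ℝ^S, ‖((I - γP)⁻¹ - (I - γQ)⁻¹) x‖₁ ≤ (γ c / (1-γ)²) · ‖x‖₁. -/

import Mathlib

open scoped BigOperators
open Matrix

lemma mulVec_l1_bound_aux {S : Type*} [Fintype S] (M : Matrix S S ℝ) (K : ℝ)
    (hK : ∀ t, ∑ s, |M s t| ≤ K) (x : S → ℝ) :
    ∑ s, |(M *ᵥ x) s| ≤ K * ∑ s, |x s| := by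
  calc ∑ s, |(M *ᵥ x) s| ≤ ∑ s, ∑ t, |M s t| * |x t| := by
        refine Finset.sum_le_sum fun s _ => ?_
        simpa [Matrix.mulVec, dotProduct, abs_mul] using
          Finset.abs_sum_le_sum_abs (fun t => M s t * x t) Finset.univ
    _ = ∑ t, (∑ s, |M s t|) * |x t| := by
        rw [Finset.sum_comm]; simp [Finset.sum_mul]
    _ ≤ ∑ t, K * |x t| :=
        Finset.sum_le_sum fun t _ => mul_le_mul_of_nonneg_right (hK t) (abs_nonneg _)
    _ = K * ∑ t, |x t| := by rw [Finset.mul_sum]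

lemma contraction_aux {S : Type*} [Fintype S] [DecidableEq S]
    (P : Matrix S S ℝ) (hP0 : ∀ s' s, 0 ≤ P s' s) (hP1 : ∀ s, ∑ s', P s' s = 1)
    (γ : ℝ) (hγ0 : 0 ≤ γ) (hγ1 : γ < 1) (v : S → ℝ) :
    (1 - γ) * ∑ s, |v s| ≤ ∑ s, |((1 - γ • P) *ᵥ v) s| := by
  have hPv : ∑ s, |(P *ᵥ v) s| ≤ 1 * ∑ s, |v s| := by
    refine mulVec_l1_bound_aux P 1 (fun t => ?_) v
    rw [show (1:ℝ) = ∑ s', P s' t from (hP1 t).symm]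
    exact Finset.sum_le_sum fun s _ => le_of_eq (abs_of_nonneg (hP0 s t))
  have hv : ∀ s, v s = ((1 - γ • P) *ᵥ v) s + γ * (P *ᵥ v) s := by
    intro s
    simp [Matrix.sub_mulVec, Matrix.smul_mulVec]
  have : ∑ s, |v s| ≤ ∑ s, (|((1 - γ • P) *ᵥ v) s| + γ * |(P *ᵥ v) s|) := by
    refine Finset.sum_le_sum fun s _ => ?_
    rw [hv s]
    calc |((1 - γ • P) *ᵥ v) s + γ * (P *ᵥ v) s|
        ≤ |((1 - γ • P) *ᵥ v) s| + |γ * (P *ᵥ v) s| := abs_add_le _ _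
      _ = |((1 - γ • P) *ᵥ v) s| + γ * |(P *ᵥ v) s| := by
          rw [abs_mul, abs_of_nonneg hγ0]
  rw [Finset.sum_add_distrib, ← Finset.mul_sum] at this
  nlinarith [hPv, mul_le_mul_of_nonneg_left hPv hγ0]

lemma stoch_isUnit_aux {S : Type*} [Fintype S] [DecidableEq S]
    (P : Matrix S S ℝ) (hP0 : ∀ s' s, 0 ≤ P s' s) (hP1 : ∀ s, ∑ s', P s' s = 1)
    (γ : ℝ) (hγ0 : 0 ≤ γ) (hγ1 : γ < 1) : IsUnit (1 - γ • P) := by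
  rw [← Matrix.mulVec_injective_iff_isUnit]
  intro x y h
  have h0 : (1 - γ • P) *ᵥ (x - y) = 0 := by
    rw [Matrix.mulVec_sub, h, sub_self]
  have := contraction_aux P hP0 hP1 γ hγ0 hγ1 (x - y)
  rw [h0] at this
  simp only [Pi.zero_apply, abs_zero, Finset.sum_const_zero] at this
  have hsum : ∑ s, |(x - y) s| ≤ 0 := by nlinarith
  have hz : ∀ s ∈ Finset.univ, |(x - y) s| = 0 := by
    intro s _
    have := Finset.sum_nonneg (fun s (_ : s ∈ Finset.univ) => abs_nonneg ((x - y) s))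
    have hsum0 : ∑ s, |(x - y) s| = 0 := le_antisymm hsum this
    exact (Finset.sum_eq_zero_iff_of_nonneg (fun s _ => abs_nonneg _)).mp hsum0 s (Finset.mem_univ s)
  funext s
  have := hz s (Finset.mem_univ s)
  have : (x - y) s = 0 := abs_eq_zero.mp this
  simpa [sub_eq_zero] using this

lemma inv_l1_bound_aux {S : Type*} [Fintype S] [DecidableEq S]
    (P : Matrix S S ℝ) (hP0 : ∀ s' s, 0 ≤ P s' s) (hP1 : ∀ s, ∑ s', P s' s = 1)
    (γ : ℝ) (hγ0 : 0 ≤ γ) (hγ1 : γ < 1) (y : S → ℝ) :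
    ∑ s, |((1 - γ • P)⁻¹ *ᵥ y) s| ≤ (1 - γ)⁻¹ * ∑ s, |y s| := by
  have hU : IsUnit (1 - γ • P) := stoch_isUnit_aux P hP0 hP1 γ hγ0 hγ1
  have hUdet : IsUnit (1 - γ • P).det := (Matrix.isUnit_iff_isUnit_det _).mp hU
  set z := (1 - γ • P)⁻¹ *ᵥ y with hz
  have hAz : (1 - γ • P) *ᵥ z = y := by
    rw [hz, Matrix.mulVec_mulVec, Matrix.mul_nonsing_inv _ hUdet, Matrix.one_mulVec]
  have := contraction_aux P hP0 hP1 γ hγ0 hγ1 z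
  rw [hAz] at this
  have h1γ : (0:ℝ) < 1 - γ := by linarith
  calc ∑ s, |z s| = (1 - γ)⁻¹ * ((1 - γ) * ∑ s, |z s|) := by field_simp
    _ ≤ (1 - γ)⁻¹ * ∑ s, |y s| := by
        exact mul_le_mul_of_nonneg_left this (le_of_lt (inv_pos.mpr h1γ))

theorem resolvent_difference_one_norm_bound {S : Type*} [Fintype S] [Nonempty S]
    [DecidableEq S]
    (P Q : Matrix S S ℝ)
    (hP0 : ∀ s' s, 0 ≤ P s' s) (hP1 : ∀ s, ∑ s', P s' s = 1)
    (hQ0 : ∀ s' s, 0 ≤ Q s' s) (hQ1 : ∀ s, ∑ s', Q s' s = 1)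
    (γ : ℝ) (hγ0 : 0 ≤ γ) (hγ1 : γ < 1)
    (c : ℝ) (hc : 0 ≤ c) (hPQ : ∀ s, ∑ s', |P s' s - Q s' s| ≤ c) :
    ∀ x : S → ℝ,
      ∑ s, |(((1 - γ • P)⁻¹ - (1 - γ • Q)⁻¹) *ᵥ x) s| ≤
        (γ * c / (1 - γ) ^ 2) * ∑ s, |x s| := by
  intro x
  have hUP : IsUnit (1 - γ • P) := stoch_isUnit_aux P hP0 hP1 γ hγ0 hγ1
  have hUQ : IsUnit (1 - γ • Q) := stoch_isUnit_aux Q hQ0 hQ1 γ hγ0 hγ1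
  have hdP : IsUnit (1 - γ • P).det := (Matrix.isUnit_iff_isUnit_det _).mp hUP
  have hdQ : IsUnit (1 - γ • Q).det := (Matrix.isUnit_iff_isUnit_det _).mp hUQ
  set A := (1 - γ • P) with hA
  set B := (1 - γ • Q) with hB
  have hres : A⁻¹ - B⁻¹ = A⁻¹ * (B - A) * B⁻¹ := by
    rw [Matrix.mul_sub, Matrix.sub_mul, Matrix.mul_assoc A⁻¹ B B⁻¹,
      Matrix.mul_nonsing_inv _ hdQ, Matrix.mul_one,
      Matrix.nonsing_inv_mul _ hdP, Matrix.one_mul]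
  have hBA : B - A = γ • (P - Q) := by
    rw [hA, hB]; rw [smul_sub]; abel
  have hvec : (A⁻¹ - B⁻¹) *ᵥ x = A⁻¹ *ᵥ ((γ • (P - Q)) *ᵥ (B⁻¹ *ᵥ x)) := by
    rw [hres, hBA, Matrix.mulVec_mulVec, Matrix.mulVec_mulVec]
  rw [hvec]
  have h1γ : (0:ℝ) < 1 - γ := by linarith
  have step1 : ∑ s, |(B⁻¹ *ᵥ x) s| ≤ (1 - γ)⁻¹ * ∑ s, |x s| :=
    inv_l1_bound_aux Q hQ0 hQ1 γ hγ0 hγ1 x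
  have step2 : ∑ s, |((γ • (P - Q)) *ᵥ (B⁻¹ *ᵥ x)) s| ≤ (γ * c) * ∑ s, |(B⁻¹ *ᵥ x) s| := by
    refine mulVec_l1_bound_aux _ (γ * c) (fun t => ?_) _
    have : ∑ s, |(γ • (P - Q)) s t| = γ * ∑ s, |(P - Q) s t| := by
      rw [Finset.mul_sum]
      refine Finset.sum_congr rfl fun s _ => ?_
      simp [abs_mul, abs_of_nonneg hγ0]
    rw [this]
    exact mul_le_mul_of_nonneg_left (by simpa using hPQ t) hγ0
  have step3 : ∑ s, |(A⁻¹ *ᵥ ((γ • (P - Q)) *ᵥ (B⁻¹ *ᵥ x))) s| ≤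
      (1 - γ)⁻¹ * ∑ s, |((γ • (P - Q)) *ᵥ (B⁻¹ *ᵥ x)) s| :=
    inv_l1_bound_aux P hP0 hP1 γ hγ0 hγ1 _
  have hBnn : 0 ≤ ∑ s, |(B⁻¹ *ᵥ x) s| := Finset.sum_nonneg fun s _ => abs_nonneg _
  have hγc : 0 ≤ γ * c := mul_nonneg hγ0 hc
  calc ∑ s, |(A⁻¹ *ᵥ ((γ • (P - Q)) *ᵥ (B⁻¹ *ᵥ x))) s|
      ≤ (1 - γ)⁻¹ * ∑ s, |((γ • (P - Q)) *ᵥ (B⁻¹ *ᵥ x)) s| := step3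
    _ ≤ (1 - γ)⁻¹ * ((γ * c) * ∑ s, |(B⁻¹ *ᵥ x) s|) :=
        mul_le_mul_of_nonneg_left step2 (le_of_lt (inv_pos.mpr h1γ))
    _ ≤ (1 - γ)⁻¹ * ((γ * c) * ((1 - γ)⁻¹ * ∑ s, |x s|)) := by
        refine mul_le_mul_of_nonneg_left ?_ (le_of_lt (inv_pos.mpr h1γ))
        exact mul_le_mul_of_nonneg_left step1 hγc
    _ = (γ * c / (1 - γ) ^ 2) * ∑ s, |x s| := by
        rw [div_eq_mul_inv]
        field_simp
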